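/- Let A be a unital C*-algebra, H a Hilbert space, ξ ∈ H a unit vector, and let θ_{ξ,ξ} ∈ B(H) be the rank-one projection η ↦ ⟨ξ, η⟩ξ. If c ∈ A ⊗ B(H) (minimal tensor product) and a ∈ A satisfy 0 ≤ c ≤ a ⊗ θ_{ξ,ξ}, then there exists b ∈ A with 0 ≤ b ≤ a and c = b ⊗ θ_{ξ,ξ}. -/

import Mathlib

open scoped InnerProductSpace

/-- In a unital C⋆-algebra, a self-adjoint element `d` with
`‖algebraMap ℝ A ‖d‖ - d‖ ≤ ‖d‖` is nonnegative. -/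
lemma BhatOsaka.aux_nonneg_of_norm {A : Type*} [CStarAlgebra A] [PartialOrder A]
    [StarOrderedRing A]
    {d : A} (hd : IsSelfAdjoint d) (h : ‖algebraMap ℝ A ‖d‖ - d‖ ≤ ‖d‖) : 0 ≤ d := by
  rcases subsingleton_or_nontrivial A with hA | hA
  · exact le_of_eq (Subsingleton.elim _ _)
  rw [StarOrderedRing.nonneg_iff_spectrum_nonneg (R := ℝ) d hd]
  intro x hx
  have hmem : ‖d‖ - x ∈ spectrum ℝ (algebraMap ℝ A ‖d‖ - d) := by
    rw [← spectrum.singleton_sub_eq]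
    exact Set.sub_mem_sub rfl hx
  have h2 := spectrum.norm_le_norm_of_mem hmem
  rw [Real.norm_eq_abs] at h2
  have := abs_le.mp (h2.trans h)
  linarith [this.1]

/-- Compression bound: if `p` is a projection of norm at most one and `0 ≤ y = p y p`,
then `‖‖y‖ • p - y‖ ≤ ‖y‖`. -/
lemma BhatOsaka.aux_compress {T : Type*} [CStarAlgebra T] [PartialOrder T] [StarOrderedRing T]
    {p y : T} (hp1 : p * p = p) (hp2 : star p = p) (hp3 : ‖p‖ ≤ 1)
    (hy : 0 ≤ y) (hpy : p * y * p = y) : ‖‖y‖ • p - y‖ ≤ ‖y‖ := by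
  have hysa : IsSelfAdjoint y := .of_nonneg hy
  have hle : y ≤ algebraMap ℝ T ‖y‖ := hysa.le_algebraMap_norm_self
  have hz : ‖y‖ • p - y = p * (algebraMap ℝ T ‖y‖ - y) * p := by
    rw [mul_sub, sub_mul, hpy, Algebra.algebraMap_eq_smul_one]
    rw [mul_smul_comm, mul_one, smul_mul_assoc, hp1]
  have hz0 : 0 ≤ ‖y‖ • p - y := by
    rw [hz]
    have h0 := star_left_conjugate_nonneg (sub_nonneg.mpr hle) p
    rwa [hp2] at h0
  have hz1 : ‖y‖ • p - y ≤ ‖y‖ • p := sub_le_self _ hy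
  calc ‖‖y‖ • p - y‖ ≤ ‖‖y‖ • p‖ := CStarAlgebra.norm_le_norm_of_nonneg_of_le hz0 hz1
    _ ≤ ‖y‖ := by
        rw [norm_smul, Real.norm_eq_abs, abs_of_nonneg (norm_nonneg y)]
        nlinarith [norm_nonneg y, hp3]

lemma BhatOsaka.theta_star {H : Type*} [NormedAddCommGroup H] [InnerProductSpace ℂ H]
    [CompleteSpace H] (ξ : H) :
    star ((innerSL ℂ ξ).smulRight ξ) = (innerSL ℂ ξ).smulRight ξ := by
  rw [ContinuousLinearMap.star_eq_adjoint, eq_comm, ContinuousLinearMap.eq_adjoint_iff]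
  intro x y
  simp only [ContinuousLinearMap.smulRight_apply, innerSL_apply_apply, inner_smul_left,
    inner_smul_right, ← inner_conj_symm x ξ]
  ring

lemma BhatOsaka.theta_conj {H : Type*} [NormedAddCommGroup H] [InnerProductSpace ℂ H]
    (ξ : H) (t : H →L[ℂ] H) :
    (innerSL ℂ ξ).smulRight ξ * t * (innerSL ℂ ξ).smulRight ξ
      = (⟪ξ, t ξ⟫_ℂ) • (innerSL ℂ ξ).smulRight ξ := by
  ext η
  simp [ContinuousLinearMap.mul_apply, inner_smul_right, smul_smul, mul_comm]

lemma BhatOsaka.theta_mul {H : Type*} [NormedAddCommGroup H] [InnerProductSpace ℂ H]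
    (ξ : H) (hξ : ‖ξ‖ = 1) :
    (innerSL ℂ ξ).smulRight ξ * (innerSL ℂ ξ).smulRight ξ = (innerSL ℂ ξ).smulRight ξ := by
  ext η
  have h1 : ⟪ξ, ξ⟫_ℂ = 1 := by
    rw [inner_self_eq_norm_sq_to_K, hξ]; norm_num
  simp [ContinuousLinearMap.mul_apply, inner_smul_right, h1, hξ]

lemma BhatOsaka.theta_norm {H : Type*} [NormedAddCommGroup H] [InnerProductSpace ℂ H]
    (ξ : H) (hξ : ‖ξ‖ = 1) : ‖(innerSL ℂ ξ).smulRight ξ‖ = 1 := by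
  rw [ContinuousLinearMap.norm_smulRight_apply, innerSL_apply_norm, hξ, one_mul]

/-- Bhat–Osaka Lemma 2.1: Let `A` be a unital C*-algebra, `H` a
Hilbert space, `ξ` a unit vector, `θ = θ_{ξ,ξ}` the rank-one projection
`η ↦ ⟪ξ, η⟫ • ξ`.  If `c` in the minimal tensor product `A ⊗ B(H)` satisfies
`0 ≤ c ≤ a ⊗ θ`, then `c = b ⊗ θ` for some `0 ≤ b ≤ a` in `A`.  The minimal
tensor product is encoded as a C*-algebra `T` together with a bilinear,
multiplicative, star-preserving, unital map `j : A → B(H) → T` with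
`‖j a t‖ = ‖a‖ * ‖t‖` and dense algebraic image. -/
theorem stmt11 {A : Type*}
    [NormedRing A] [StarRing A] [CStarRing A] [NormedAlgebra ℂ A]
    [CompleteSpace A] [StarModule ℂ A] [PartialOrder A] [StarOrderedRing A]
    {H : Type*} [NormedAddCommGroup H] [InnerProductSpace ℂ H] [CompleteSpace H]
    {T : Type*}
    [NormedRing T] [StarRing T] [CStarRing T] [NormedAlgebra ℂ T]
    [CompleteSpace T] [StarModule ℂ T] [PartialOrder T] [StarOrderedRing T]
    -- the minimal tensor product A ⊗ B(H), via j a t = a ⊗ t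
    (j : A → (H →L[ℂ] H) → T)
    (hadd₁ : ∀ a a' t, j (a + a') t = j a t + j a' t)
    (hadd₂ : ∀ a t t', j a (t + t') = j a t + j a t')
    (hsmul₁ : ∀ (z : ℂ) a t, j (z • a) t = z • j a t)
    (hsmul₂ : ∀ (z : ℂ) a t, j a (z • t) = z • j a t)
    (hmul : ∀ a a' t t', j a t * j a' t' = j (a * a') (t * t'))
    (hstar : ∀ a t, star (j a t) = j (star a) (star t))
    (hone : j 1 1 = 1)
    (hnorm : ∀ a t, ‖j a t‖ = ‖a‖ * ‖t‖)
    (hdense : (Submodule.span ℂ {x : T | ∃ a t, x = j a t}).topologicalClosure = ⊤)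
    -- the data
    (ξ : H) (hξ : ‖ξ‖ = 1) (θ : H →L[ℂ] H)
    (hθ : θ = (innerSL ℂ ξ).smulRight ξ)
    (a : A) (c : T)
    (hc₀ : 0 ≤ c) (hc₁ : c ≤ j a θ) :
    ∃ b : A, 0 ≤ b ∧ b ≤ a ∧ c = j b θ := by
  letI : CStarAlgebra A :=
    { ‹NormedRing A›, ‹StarRing A›, ‹CStarRing A›, ‹NormedAlgebra ℂ A›,
      ‹CompleteSpace A›, ‹StarModule ℂ A› with }
  letI : CStarAlgebra T :=
    { ‹NormedRing T›, ‹StarRing T›, ‹CStarRing T›, ‹NormedAlgebra ℂ T›,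
      ‹CompleteSpace T›, ‹StarModule ℂ T› with }
  -- facts about θ
  have hθstar : star θ = θ := by rw [hθ]; exact BhatOsaka.theta_star ξ
  have hθmul : θ * θ = θ := by rw [hθ]; exact BhatOsaka.theta_mul ξ hξ
  have hθnorm : ‖θ‖ = 1 := by rw [hθ]; exact BhatOsaka.theta_norm ξ hξ
  have hθconj : ∀ t : H →L[ℂ] H, θ * t * θ = (⟪ξ, t ξ⟫_ℂ) • θ := by
    intro t; rw [hθ]; exact BhatOsaka.theta_conj ξ t
  -- facts about j and the projection p
  have hjnorm : ∀ b : A, ‖j b θ‖ = ‖b‖ := fun b => by rw [hnorm, hθnorm, mul_one]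
  have hsub : ∀ b b' : A, j (b - b') θ = j b θ - j b' θ := by
    intro b b'
    have h := hadd₁ b' (b - b') θ
    rw [add_sub_cancel] at h
    rw [h]; abel
  have hinj : ∀ b b' : A, j b θ = j b' θ → b = b' := by
    intro b b' h
    have h0 : ‖b - b'‖ = 0 := by rw [← hjnorm, hsub, h, sub_self, norm_zero]
    exact sub_eq_zero.mp (norm_eq_zero.mp h0)
  set p := j 1 θ with hp
  have hpmul : p * p = p := by rw [hp, hmul, one_mul, hθmul]
  have hpstar : star p = p := by rw [hp, hstar, star_one, hθstar]
  have hpnorm : ‖p‖ ≤ 1 := by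
    have h1 : ‖(1:A)‖ * ‖(1:A)‖ = ‖(1:A)‖ := by
      rw [← CStarRing.norm_star_mul_self (x := (1:A)), star_one, one_mul]
    have h2 : ‖p‖ = ‖(1:A)‖ := hjnorm 1
    rcases eq_or_lt_of_le (norm_nonneg (1:A)) with h3 | h3
    · rw [h2, ← h3]; norm_num
    · rw [h2]; nlinarith
  -- left/right multiplication by p fixes j b θ
  have hpj : ∀ b : A, p * j b θ = j b θ := fun b => by
    rw [hp, hmul, one_mul, hθmul]
  have hjp : ∀ b : A, j b θ * p = j b θ := fun b => by
    rw [hp, hmul, mul_one, hθmul]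
  -- self-adjointness
  have hcsa : IsSelfAdjoint c := .of_nonneg hc₀
  have hja_nonneg : 0 ≤ j a θ := hc₀.trans hc₁
  have hasa : star a = a := by
    have h := hstar a θ
    rw [hθstar, (IsSelfAdjoint.of_nonneg hja_nonneg).star_eq] at h
    exact hinj _ _ h.symm
  -- Step 1 : c = p * c * p
  set q := (1 : T) - p with hq
  have hqstar : star q = q := by rw [hq, star_sub, star_one, hpstar]
  have hjaq : j a θ * q = 0 := by
    rw [hq, mul_sub, mul_one, hjp, sub_self]
  have hqq : q * (j a θ) * q = 0 := by
    rw [mul_assoc, hjaq, mul_zero]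
  have hqcq0 : q * c * q = 0 := by
    refine le_antisymm ?_ ?_
    · have h := star_left_conjugate_le_conjugate hc₁ q
      rwa [hqstar, hqq] at h
    · have h := star_left_conjugate_nonneg hc₀ q
      rwa [hqstar] at h
  have hss : CFC.sqrt c * CFC.sqrt c = c := CFC.sqrt_mul_sqrt_self c hc₀
  have hssa : star (CFC.sqrt c) = CFC.sqrt c :=
    (IsSelfAdjoint.of_nonneg (CFC.sqrt_nonneg (a := c))).star_eq
  have hsq : CFC.sqrt c * q = 0 := by
    have hnz : ‖CFC.sqrt c * q‖ * ‖CFC.sqrt c * q‖ = 0 := by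
      rw [← CStarRing.norm_star_mul_self]
      have h : star (CFC.sqrt c * q) * (CFC.sqrt c * q) = q * c * q := by
        calc star (CFC.sqrt c * q) * (CFC.sqrt c * q)
            = q * (CFC.sqrt c * CFC.sqrt c) * q := by
              rw [star_mul, hqstar, hssa]; noncomm_ring
          _ = q * c * q := by rw [hss]
      rw [h, hqcq0, norm_zero]
    exact norm_eq_zero.mp (mul_self_eq_zero.mp hnz)
  have hcq : c * q = 0 := by rw [← hss, mul_assoc, hsq, mul_zero]
  have hqc : q * c = 0 := by
    have h := congrArg star hcq
    rwa [star_mul, hqstar, hcsa.star_eq, star_zero] at h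
  have h1q : (1 : T) - q = p := by rw [hq, sub_sub_cancel]
  have hcp : c * p = c := by
    rw [← h1q, mul_sub, mul_one, hcq, sub_zero]
  have hpc : p * c = c := by
    rw [← h1q, sub_mul, one_mul, hqc, sub_zero]
  have hpcp : p * c * p = c := by rw [hpc, hcp]
  -- Step 2 : c = j b θ for some b
  let Sl : A →ₗ[ℂ] T :=
    { toFun := fun b => j b θ
      map_add' := fun b b' => hadd₁ b b' θ
      map_smul' := fun z b => hsmul₁ z b θ }
  have hSiso : Isometry Sl := AddMonoidHomClass.isometry_of_norm Sl hjnorm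
  have hRclosed : IsClosed (LinearMap.range Sl : Set T) := by
    rw [LinearMap.coe_range]
    exact hSiso.isClosedEmbedding.isClosed_range
  have hcont : Continuous fun x : T => p * x * p :=
    ((continuous_mul_left p).comp continuous_id).mul continuous_const
  have hsubset : (Submodule.span ℂ {x : T | ∃ a t, x = j a t} : Set T)
      ⊆ (fun x : T => p * x * p) ⁻¹' (LinearMap.range Sl : Set T) := by
    intro x hx
    induction hx using Submodule.span_induction with
    | mem x hx =>
        obtain ⟨a', t, rfl⟩ := hx
        have h1 : p * j a' t * p = j (⟪ξ, t ξ⟫_ℂ • a') θ := by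
          rw [hp, hmul, one_mul, hmul, mul_one, hθconj, hsmul₂, hsmul₁]
        rw [Set.mem_preimage, SetLike.mem_coe, LinearMap.mem_range]
        exact ⟨⟪ξ, t ξ⟫_ℂ • a', h1.symm⟩
    | zero =>
        rw [Set.mem_preimage, SetLike.mem_coe]
        simpa only [mul_zero, zero_mul] using Submodule.zero_mem _
    | add x y hx hy ihx ihy =>
        rw [Set.mem_preimage, SetLike.mem_coe, LinearMap.mem_range] at ihx ihy ⊢
        obtain ⟨bx, hbx⟩ := ihx
        obtain ⟨by', hby⟩ := ihy
        exact ⟨bx + by', by rw [map_add, hbx, hby, mul_add, add_mul]⟩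
    | smul z x hx ihx =>
        rw [Set.mem_preimage, SetLike.mem_coe, LinearMap.mem_range] at ihx ⊢
        obtain ⟨bx, hbx⟩ := ihx
        exact ⟨z • bx, by rw [map_smul, hbx]; rw [mul_smul_comm, smul_mul_assoc]⟩
  have hdense' : closure (Submodule.span ℂ {x : T | ∃ a t, x = j a t} : Set T) = Set.univ := by
    have h := congrArg (SetLike.coe) hdense
    simpa [Submodule.topologicalClosure_coe] using h
  have hcmem : p * c * p ∈ (LinearMap.range Sl : Set T) := by
    have h1 : c ∈ closure (Submodule.span ℂ {x : T | ∃ a t, x = j a t} : Set T) := by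
      rw [hdense']; trivial
    have h2 : closure (Submodule.span ℂ {x : T | ∃ a t, x = j a t} : Set T)
        ⊆ (fun x : T => p * x * p) ⁻¹' (LinearMap.range Sl : Set T) :=
      closure_minimal hsubset (hRclosed.preimage hcont)
    exact h2 h1
  rw [hpcp, SetLike.mem_coe, LinearMap.mem_range] at hcmem
  obtain ⟨b, hb⟩ := hcmem
  have hb' : j b θ = c := hb
  -- Step 3 : positivity transfer
  have hbsa : star b = b := by
    have h := hstar b θ
    rw [hθstar, hb', hcsa.star_eq] at h
    exact hinj _ _ (h.symm.trans hb'.symm)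
  have key : ∀ d : A, star d = d → 0 ≤ j d θ → 0 ≤ d := by
    intro d hdsa hy
    refine BhatOsaka.aux_nonneg_of_norm hdsa ?_
    have hpyp : p * j d θ * p = j d θ := by rw [hpj, hjp]
    have hyd : ‖j d θ‖ = ‖d‖ := hjnorm d
    have hsmulR : ∀ (r : ℝ) (x : A), j (r • x) θ = r • j x θ := by
      intro r x
      have h1 : r • x = (r : ℂ) • x := by
        rw [← algebraMap_smul ℂ r x, Complex.coe_algebraMap]
      have h2 : (r : ℂ) • j x θ = r • j x θ := by
        rw [← algebraMap_smul ℂ r (j x θ), Complex.coe_algebraMap]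
      rw [h1, hsmul₁, h2]
    have hkey : j (algebraMap ℝ A ‖d‖ - d) θ = ‖j d θ‖ • p - j d θ := by
      rw [hsub, Algebra.algebraMap_eq_smul_one, hsmulR, hyd]
    have hcmp := BhatOsaka.aux_compress hpmul hpstar hpnorm hy hpyp
    rw [← hkey, hjnorm, hyd] at hcmp
    exact hcmp
  have hb0 : 0 ≤ b := key b hbsa (hb' ▸ hc₀)
  have hba : b ≤ a := by
    have habsa : star (a - b) = a - b := by rw [star_sub, hasa, hbsa]
    have h1 : 0 ≤ j (a - b) θ := by
      rw [hsub, hb']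
      exact sub_nonneg.mpr hc₁
    exact sub_nonneg.mp (key (a - b) habsa h1)
  exact ⟨b, hb0, hba, hb'.symm⟩
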